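/- arXiv:1711.01317 — 2 statements merged into one kernel-verified Lean document; each statement's English description precedes it below -/
import Mathlib

section
/- Let f : [a,b] → ℝ be continuously differentiable with f' positive and monotone on (a,b), and suppose inf_{(a,b)} f' = μ > 0. Then |∫_a^b e^{i f(y)} dy| ≤ C/μ for an absolute constant C (one may take C = 4). -/
open Set

open MeasureTheory
theorem first_derivative_oscillatory_bound
    (a b : ℝ) (hab : a < b) (f f' : ℝ → ℝ) (mu : ℝ) (hmu : 0 < mu)
    (hderiv : ∀ y ∈ Icc a b, HasDerivAt f (f' y) y)
    (hcont : ContinuousOn f' (Icc a b))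
    (hpos : ∀ y ∈ Ioo a b, 0 < f' y)
    (hmono : MonotoneOn f' (Ioo a b) ∨ AntitoneOn f' (Ioo a b))
    (hinf : ∀ y ∈ Ioo a b, mu ≤ f' y) :
    ‖∫ y in a..b, Complex.exp (Complex.I * (f y : ℂ))‖ ≤ 4 / mu := by
  classical
  set cl : ℝ → ℝ := fun y => max a (min b y) with hcl_def
  have hcl_mem : ∀ y, cl y ∈ Icc a b := by
    intro y
    refine ⟨le_max_left _ _, ?_⟩
    simp only [hcl_def, max_le_iff]
    exact ⟨hab.le, min_le_left _ _⟩
  have hcl_id : ∀ y ∈ Icc a b, cl y = y := by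
    intro y hy
    simp only [hcl_def]
    rw [min_eq_right hy.2, max_eq_right hy.1]
  have hcl_cont : Continuous cl := continuous_const.max (continuous_const.min continuous_id)
  have hf'mu : ∀ y ∈ Icc a b, mu ≤ f' y := by
    intro y hy
    have hyc : y ∈ closure (Ioo a b) := by rw [closure_Ioo hab.ne]; exact hy
    have hnb : (nhdsWithin y (Ioo a b)).NeBot := mem_closure_iff_nhdsWithin_neBot.1 hyc
    have htend : Filter.Tendsto f' (nhdsWithin y (Ioo a b)) (nhds (f' y)) :=
      (hcont y hy).mono Ioo_subset_Icc_self
    exact ge_of_tendsto htend (Filter.eventually_of_mem self_mem_nhdsWithin hinf)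
  set φ : ℝ → ℝ := fun y => f' (cl y) with hφ_def
  have hφcont : Continuous φ := hcont.comp_continuous hcl_cont hcl_mem
  have hφmu : ∀ y, mu ≤ φ y := fun y => hf'mu _ (hcl_mem y)
  have hφpos : ∀ y, 0 < φ y := fun y => lt_of_lt_of_le hmu (hφmu y)
  set g : ℝ → ℝ := fun y => (φ y)⁻¹ with hg_def
  have hgcont : Continuous g := hφcont.inv₀ fun y => (hφpos y).ne'
  have hgle : ∀ y, g y ≤ mu⁻¹ := fun y => inv_anti₀ hmu (hφmu y)
  have hgpos : ∀ y, 0 < g y := fun y => inv_pos.2 (hφpos y)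
  have hφeq : ∀ y ∈ Icc a b, φ y = f' y := by
    intro y hy; simp only [hφ_def]; rw [hcl_id y hy]
  have hfcont : ContinuousOn f (Icc a b) := fun y hy =>
    ((hderiv y hy).continuousAt).continuousWithinAt
  set fc : ℝ → ℝ := fun y => f (cl y) with hfc_def
  have hfccont : Continuous fc := hfcont.comp_continuous hcl_cont hcl_mem
  set h : ℝ → ℂ := fun y => Complex.exp (Complex.I * (fc y : ℂ)) * (φ y : ℂ) with hh_def
  have hhcont : Continuous h := by
    apply Continuous.mul
    · exact Complex.continuous_exp.comp
        (continuous_const.mul (Complex.continuous_ofReal.comp hfccont))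
    · exact Complex.continuous_ofReal.comp hφcont
  have hnorm_exp : ∀ x : ℝ, ‖Complex.exp (Complex.I * (x : ℂ))‖ = 1 := by
    intro x; rw [mul_comm]; exact Complex.norm_exp_ofReal_mul_I x
  have hnormh : ∀ y, ‖h y‖ = φ y := by
    intro y
    simp only [hh_def]
    rw [norm_mul, hnorm_exp, one_mul, Complex.norm_real, Real.norm_eq_abs,
      abs_of_pos (hφpos y)]
  obtain ⟨m, hm, hmax⟩ := isCompact_Icc.exists_isMaxOn (nonempty_Icc.2 hab.le) hcont
  set C : ℝ := f' m with hC_def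
  have hφC : ∀ y, φ y ≤ C := fun y => hmax (hcl_mem y)
  have hC0 : 0 ≤ C := le_trans hmu.le (le_trans (hφmu a) (hφC a))
  set A : Set (ℝ × ℝ) := {p | p.1 ∈ Ioo a b ∧ 0 ≤ p.2 ∧ p.2 < g p.1} with hA_def
  have hAmeas : MeasurableSet A := by
    have hA2 : A = ({p : ℝ × ℝ | a < p.1} ∩ {p | p.1 < b}) ∩
        ({p : ℝ × ℝ | 0 ≤ p.2} ∩ {p | p.2 < g p.1}) := by
      ext p
      simp only [hA_def, mem_setOf_eq, mem_Ioo, mem_inter_iff]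
    rw [hA2]
    exact ((measurableSet_lt measurable_const measurable_fst).inter
      (measurableSet_lt measurable_fst measurable_const)).inter
      ((measurableSet_le measurable_const measurable_snd).inter
      (measurableSet_lt measurable_snd (hgcont.measurable.comp measurable_fst)))
  set Φ : ℝ × ℝ → ℂ := A.indicator (fun p => h p.1) with hΦ_def
  have hΦsm : AEStronglyMeasurable Φ (volume.prod volume) :=
    (((hhcont.comp continuous_fst).stronglyMeasurable).indicator hAmeas).aestronglyMeasurable
  have hAsub : A ⊆ Icc a b ×ˢ Icc 0 mu⁻¹ := by
    rintro ⟨y, t⟩ ⟨hy, ht0, htg⟩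
    exact ⟨Ioo_subset_Icc_self hy, ht0, le_trans htg.le (hgle y)⟩
  have hboxfin : (volume.prod volume) (Icc a b ×ˢ Icc 0 mu⁻¹) < ⊤ := by
    rw [← MeasureTheory.Measure.volume_eq_prod]
    exact (isCompact_Icc.prod isCompact_Icc).measure_lt_top
  have hΦint : Integrable Φ (volume.prod volume) := by
    refine Integrable.mono'
      (g := (Icc a b ×ˢ Icc 0 mu⁻¹).indicator fun _ => C) ?_ hΦsm ?_
    · exact (integrable_indicator_iff (measurableSet_Icc.prod measurableSet_Icc)).2
        (integrableOn_const hboxfin.ne)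
    · refine Filter.Eventually.of_forall fun p => ?_
      by_cases hp : p ∈ A
      · rw [hΦ_def, Set.indicator_of_mem hp, Set.indicator_of_mem (hAsub hp)]
        rw [hnormh]
        exact hφC _
      · rw [hΦ_def, Set.indicator_of_notMem hp, norm_zero]
        exact Set.indicator_nonneg (fun _ _ => hC0) _
  have hswap : (∫ y : ℝ, (∫ t : ℝ, Φ (y, t))) = ∫ t : ℝ, (∫ y : ℝ, Φ (y, t)) := by
    have h1 : Integrable (Function.uncurry fun y t => Φ (y, t)) (volume.prod volume) := by
      exact hΦint
    exact integral_integral_swap h1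
  -- evaluation of the inner t-integral
  have hinner : ∀ y : ℝ, (∫ t : ℝ, Φ (y, t)) =
      (Ioo a b).indicator (fun y => Complex.exp (Complex.I * (f y : ℂ))) y := by
    intro y
    by_cases hy : y ∈ Ioo a b
    · have h1 : (fun t => Φ (y, t)) = (Ico 0 (g y)).indicator fun _ => h y := by
        funext t
        by_cases ht : t ∈ Ico 0 (g y)
        · rw [Set.indicator_of_mem ht, hΦ_def, Set.indicator_of_mem]
          exact ⟨hy, ht.1, ht.2⟩
        · rw [Set.indicator_of_notMem ht, hΦ_def, Set.indicator_of_notMem]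
          intro hmem
          exact ht ⟨hmem.2.1, hmem.2.2⟩
      rw [h1, integral_indicator_const _ measurableSet_Ico, Set.indicator_of_mem hy,
        Real.volume_real_Ico_of_le (hgpos y).le, sub_zero]
      have hy' : y ∈ Icc a b := Ioo_subset_Icc_self hy
      have hcly : cl y = y := hcl_id y hy'
      have hfcy : fc y = f y := by simp only [hfc_def]; rw [hcly]
      have hprod : g y * φ y = 1 := inv_mul_cancel₀ (hφpos y).ne'
      rw [hh_def]
      simp only [hfcy]
      rw [Complex.real_smul]
      rw [show ((g y : ℂ)) * (Complex.exp (Complex.I * (f y : ℂ)) * (φ y : ℂ)) =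
        Complex.exp (Complex.I * (f y : ℂ)) * ((g y : ℂ) * (φ y : ℂ)) from by ring]
      rw [← Complex.ofReal_mul, hprod, Complex.ofReal_one, mul_one]
    · have h1 : (fun t => Φ (y, t)) = fun _ => (0 : ℂ) := by
        funext t
        rw [hΦ_def, Set.indicator_of_notMem]
        intro hmem
        exact hy hmem.1
      rw [h1, integral_zero, Set.indicator_of_notMem hy]
  have hLHS : (∫ y : ℝ, (∫ t : ℝ, Φ (y, t))) =
      ∫ y in a..b, Complex.exp (Complex.I * (f y : ℂ)) := by
    rw [integral_congr_ae (Filter.Eventually.of_forall hinner),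
      integral_indicator measurableSet_Ioo,
      ← MeasureTheory.integral_Ioc_eq_integral_Ioo,
      ← intervalIntegral.integral_of_le hab.le]
  -- the fundamental-theorem bound on order-connected pieces
  have hFTC : ∀ c d : ℝ, a ≤ c → c ≤ d → d ≤ b → ‖∫ y in Ioo c d, h y‖ ≤ 2 := by
    intro c d hac hcd hdb
    have hsub : Icc c d ⊆ Icc a b := Icc_subset_Icc hac hdb
    set E : ℝ → ℂ := fun y => Complex.exp (Complex.I * (f y : ℂ)) with hE_def
    have hE : ∀ y ∈ Icc c d, HasDerivAt E (E y * (Complex.I * (f' y : ℂ))) y := fun y hy =>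
      (((hderiv y (hsub hy)).ofReal_comp).const_mul Complex.I).cexp
    have hEcont : ContinuousOn E (Icc c d) :=
      Complex.continuous_exp.comp_continuousOn
        (continuousOn_const.mul (Complex.continuous_ofReal.comp_continuousOn
          (hfcont.mono hsub)))
    have hcont2 : ContinuousOn (fun y => E y * (Complex.I * (f' y : ℂ))) (Icc c d) :=
      hEcont.mul (continuousOn_const.mul
        (Complex.continuous_ofReal.comp_continuousOn (hcont.mono hsub)))
    have hii : IntervalIntegrable (fun y => E y * (Complex.I * (f' y : ℂ))) volume c d := by
      apply ContinuousOn.intervalIntegrable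
      rwa [uIcc_of_le hcd]
    have hftc : (∫ y in c..d, E y * (Complex.I * (f' y : ℂ))) = E d - E c := by
      refine intervalIntegral.integral_eq_sub_of_hasDerivAt (fun y hy => hE y ?_) hii
      rwa [uIcc_of_le hcd] at hy
    have heq : EqOn h (fun y => E y * (f' y : ℂ)) (Ioo c d) := by
      intro y hy
      have hy' : y ∈ Icc a b := hsub (Ioo_subset_Icc_self hy)
      have hcly : cl y = y := hcl_id y hy'
      simp only [hh_def, hE_def, hfc_def, hφ_def]
      rw [hcly]
    calc ‖∫ y in Ioo c d, h y‖
        = ‖∫ y in Ioo c d, E y * (f' y : ℂ)‖ := by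
          rw [setIntegral_congr_fun measurableSet_Ioo heq]
      _ = ‖∫ y in c..d, E y * (f' y : ℂ)‖ := by
          rw [intervalIntegral.integral_of_le hcd, MeasureTheory.integral_Ioc_eq_integral_Ioo]
      _ = ‖Complex.I⁻¹ * (E d - E c)‖ := by
          rw [← hftc, ← intervalIntegral.integral_const_mul]
          congr 1
          apply intervalIntegral.integral_congr
          intro y _
          show E y * (f' y : ℂ) = Complex.I⁻¹ * (E y * (Complex.I * (f' y : ℂ)))
          rw [show Complex.I⁻¹ * (E y * (Complex.I * (f' y : ℂ))) =
            (Complex.I⁻¹ * Complex.I) * (E y * (f' y : ℂ)) from by ring,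
            inv_mul_cancel₀ Complex.I_ne_zero, one_mul]
      _ ≤ 1 * (‖E d‖ + ‖E c‖) := by
          rw [norm_mul]
          gcongr
          · simp
          · exact norm_sub_le _ _
      _ = 2 := by
          simp only [hE_def]
          rw [hnorm_exp, hnorm_exp]
          norm_num
  -- bound on the inner y-integral
  have hRHSbound : ∀ t : ℝ, ‖∫ y : ℝ, Φ (y, t)‖ ≤
      (Ico (0 : ℝ) mu⁻¹).indicator (fun _ => (2 : ℝ)) t := by
    intro t
    by_cases ht : 0 ≤ t ∧ t < mu⁻¹
    · obtain ⟨ht0, htM⟩ := ht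
      rw [Set.indicator_of_mem (mem_Ico.2 ⟨ht0, htM⟩)]
      set T : Set ℝ := {y | y ∈ Ioo a b ∧ t < g y} with hT_def
      have hTmeas : MeasurableSet T := by
        have : T = Ioo a b ∩ g ⁻¹' (Ioi t) := by
          ext y; simp [hT_def]
        rw [this]
        exact measurableSet_Ioo.inter (hgcont.measurable measurableSet_Ioi)
      have hΦt : (fun y => Φ (y, t)) = T.indicator h := by
        funext y
        by_cases hy : y ∈ T
        · rw [Set.indicator_of_mem hy, hΦ_def, Set.indicator_of_mem]
          exact ⟨hy.1, ht0, hy.2⟩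
        · rw [Set.indicator_of_notMem hy, hΦ_def, Set.indicator_of_notMem]
          rintro ⟨h1, _, h3⟩
          exact hy ⟨h1, h3⟩
      rw [hΦt, integral_indicator hTmeas]
      rcases T.eq_empty_or_nonempty with hTe | hTne
      · rw [hTe]
        simp
      · have hTsub : T ⊆ Ioo a b := fun y hy => hy.1
        have hbdd_above : BddAbove T := bddAbove_Ioo.mono hTsub
        have hbdd_below : BddBelow T := bddBelow_Ioo.mono hTsub
        set c := sInf T with hc_def
        set d := sSup T with hd_def
        have hac : a ≤ c := le_csInf hTne fun y hy => (hTsub hy).1.le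
        have hdb : d ≤ b := csSup_le hTne fun y hy => (hTsub hy).2.le
        have hcd : c ≤ d := by
          obtain ⟨y0, hy0⟩ := hTne
          exact le_trans (csInf_le hbdd_below hy0) (le_csSup hbdd_above hy0)
        have hord : ∀ x1 ∈ T, ∀ x3 ∈ T, ∀ x2, x1 ≤ x2 → x2 ≤ x3 → x2 ∈ T := by
          intro x1 hx1 x3 hx3 x2 h12 h23
          have hx2ab : x2 ∈ Ioo a b :=
            ⟨lt_of_lt_of_le (hTsub hx1).1 h12, lt_of_le_of_lt h23 (hTsub hx3).2⟩
          refine ⟨hx2ab, ?_⟩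
          rcases hmono with hM | hA
          · have hle : f' x2 ≤ f' x3 := hM hx2ab (hTsub hx3) h23
            have hgle2 : g x3 ≤ g x2 := by
              simp only [hg_def]
              rw [hφeq _ (Ioo_subset_Icc_self hx2ab), hφeq _ (Ioo_subset_Icc_self (hTsub hx3))]
              exact inv_anti₀ (hpos _ hx2ab) hle
            exact lt_of_lt_of_le hx3.2 hgle2
          · have hle : f' x2 ≤ f' x1 := hA (hTsub hx1) hx2ab h12
            have hgle2 : g x1 ≤ g x2 := by
              simp only [hg_def]
              rw [hφeq _ (Ioo_subset_Icc_self hx2ab), hφeq _ (Ioo_subset_Icc_self (hTsub hx1))]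
              exact inv_anti₀ (hpos _ hx2ab) hle
            exact lt_of_lt_of_le hx1.2 hgle2
        have hIoosub : Ioo c d ⊆ T := by
          intro x hx
          obtain ⟨y1, hy1T, hy1lt⟩ := exists_lt_of_csInf_lt hTne hx.1
          obtain ⟨y2, hy2T, hy2gt⟩ := exists_lt_of_lt_csSup hTne hx.2
          exact hord y1 hy1T y2 hy2T x hy1lt.le hy2gt.le
        have hTsubIcc : T ⊆ Icc c d := fun y hy =>
          ⟨csInf_le hbdd_below hy, le_csSup hbdd_above hy⟩
        have hae : T =ᵐ[volume] Ioo c d := by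
          rw [MeasureTheory.ae_eq_set]
          constructor
          · refine measure_mono_null (fun y hy => ?_) (?_ : volume ({c, d} : Set ℝ) = 0)
            · obtain ⟨hyT, hyn⟩ := hy
              have hyIcc := hTsubIcc hyT
              rcases eq_or_lt_of_le hyIcc.1 with h1 | h1
              · exact Or.inl h1.symm
              · rcases eq_or_lt_of_le hyIcc.2 with h2 | h2
                · exact Or.inr h2
                · exact absurd ⟨h1, h2⟩ hyn
            · exact Set.Finite.measure_zero (by simp) volume
          · rw [diff_eq_empty.2 hIoosub]
            exact measure_empty
        rw [setIntegral_congr_set hae]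
        exact hFTC c d hac hcd hdb
    · have hzero : (fun y => Φ (y, t)) = fun _ => (0 : ℂ) := by
        funext y
        rw [hΦ_def, Set.indicator_of_notMem]
        rintro ⟨_, hy2, hy3⟩
        exact ht ⟨hy2, lt_of_lt_of_le hy3 (hgle y)⟩
      rw [hzero, integral_zero, norm_zero]
      exact Set.indicator_nonneg (fun _ _ => by norm_num) t
  have hB : Integrable ((Ico (0 : ℝ) mu⁻¹).indicator fun _ => (2 : ℝ)) volume :=
    (integrable_indicator_iff measurableSet_Ico).2
      (integrableOn_const (by rw [Real.volume_Ico]; exact ENNReal.ofReal_ne_top))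
  have hfinal : ‖∫ t : ℝ, (∫ y : ℝ, Φ (y, t))‖ ≤
      ∫ t : ℝ, (Ico (0 : ℝ) mu⁻¹).indicator (fun _ => (2 : ℝ)) t :=
    norm_integral_le_of_norm_le hB (Filter.Eventually.of_forall hRHSbound)
  have hBval : (∫ t : ℝ, (Ico (0 : ℝ) mu⁻¹).indicator (fun _ => (2 : ℝ)) t) = 2 * mu⁻¹ := by
    rw [integral_indicator_const _ measurableSet_Ico, Real.volume_real_Ico_of_le (inv_nonneg.2 hmu.le), sub_zero,
      smul_eq_mul]
    ring
  rw [← hLHS, hswap]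
  refine le_trans (hBval ▸ hfinal) ?_
  rw [div_eq_mul_inv]
  nlinarith [inv_nonneg.2 hmu.le]
end

section
/- For every integer m ≥ 1 and every θ ∈ (0, π), the Legendre polynomial satisfies P_m(cos θ)² ≤ (2/π) · 1/(m sin θ). -/
open Polynomial Real

/-- The Legendre polynomial of degree `m` (normalized so that `P_m(1) = 1`),
defined by the Rodrigues formula. -/
noncomputable def legendreP (m : ℕ) : Polynomial ℝ :=
  Polynomial.C (1 / (2 ^ m * (Nat.factorial m : ℝ))) *
    (Polynomial.derivative^[m] ((Polynomial.X ^ 2 - 1) ^ m))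

lemma iter_deriv_X_mul (Q : Polynomial ℝ) (n : ℕ) :
    derivative^[n+1] (X * Q) =
      X * derivative^[n+1] Q + ((n : Polynomial ℝ) + 1) * derivative^[n] Q := by
  induction n with
  | zero => simp [derivative_mul, map_ofNat]; ring
  | succ n ih =>
    rw [Function.iterate_succ_apply', ih]
    rw [show derivative^[n+1+1] Q = derivative (derivative^[n+1] Q) from
      (Function.iterate_succ_apply' _ _ _),
      show derivative^[n+1] Q = derivative (derivative^[n] Q) from
      (Function.iterate_succ_apply' _ _ _)]
    simp [derivative_mul, map_ofNat]
    push_cast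
    ring

lemma iter_deriv_sq_mul (Q : Polynomial ℝ) (n : ℕ) :
    derivative^[n+1] ((X^2 - 1) * derivative Q) =
      (X^2 - 1) * derivative^[n+2] Q + (2*((n : Polynomial ℝ))+2) * X * derivative^[n+1] Q
        + (((n : Polynomial ℝ))+1)*(n : Polynomial ℝ) * derivative^[n] Q := by
  induction n with
  | zero =>
    simp only [Function.iterate_succ_apply', Function.iterate_zero, id_eq,
      Function.iterate_one]
    simp [derivative_mul, map_ofNat]
    ring
  | succ n ih =>
    rw [Function.iterate_succ_apply', ih]
    rw [show derivative^[n+1+2] Q = derivative (derivative^[n+2] Q) from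
      (Function.iterate_succ_apply' _ _ _),
      show derivative^[n+2] Q = derivative (derivative^[n+1] Q) from
      (Function.iterate_succ_apply' _ _ _),
      show derivative^[n+1] Q = derivative (derivative^[n] Q) from
      (Function.iterate_succ_apply' _ _ _)]
    simp [derivative_mul, map_ofNat]
    push_cast
    ring


lemma legendre_ODE (m : ℕ) (hm : 1 ≤ m) :
    (1 - X^2) * derivative (derivative (legendreP m)) - 2 * X * derivative (legendreP m)
      + ((m : Polynomial ℝ) * ((m : Polynomial ℝ) + 1)) * legendreP m = 0 := by
  have hpow : ((X^2-1 : Polynomial ℝ))^m = (X^2-1) * ((X^2-1)^(m-1)) := by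
    rw [← pow_succ']
    congr 1
    omega
  have h0 : (X^2-1) * derivative ((X^2-1 : Polynomial ℝ)^m)
      = C (2*(m:ℝ)) * (X * (X^2-1)^m) := by
    rw [derivative_pow, derivative_sub, derivative_one, derivative_X_pow]
    rw [hpow]
    push_cast [map_ofNat, map_mul, C_eq_natCast]
    ring
  have h1 : derivative^[m+1] ((X^2-1) * derivative ((X^2-1 : Polynomial ℝ)^m)) =
      derivative^[m+1] (C (2*(m:ℝ)) * (X*(X^2-1)^m)) := by rw [h0]
  rw [iter_deriv_sq_mul _ m, iterate_derivative_C_mul, iter_deriv_X_mul _ m,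
    map_mul, map_ofNat, C_eq_natCast] at h1
  unfold legendreP
  rw [derivative_C_mul, derivative_C_mul]
  rw [show derivative (derivative^[m] ((X^2-1 : Polynomial ℝ)^m))
        = derivative^[m+1] ((X^2-1 : Polynomial ℝ)^m) from
    (Function.iterate_succ_apply' _ _ _).symm,
    show derivative (derivative^[m+1] ((X^2-1 : Polynomial ℝ)^m))
        = derivative^[m+2] ((X^2-1 : Polynomial ℝ)^m) from
    (Function.iterate_succ_apply' _ _ _).symm]
  linear_combination (-(C (1 / (2 ^ m * (m.factorial : ℝ))))) * h1

lemma legendre_ODE_eval (m : ℕ) (hm : 1 ≤ m) (x : ℝ) :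
    (1 - x^2) * (derivative (derivative (legendreP m))).eval x
      - 2*x*((derivative (legendreP m)).eval x)
      + ((m:ℝ)*((m:ℝ)+1))*(legendreP m).eval x = 0 := by
  have h := congrArg (eval x) (legendre_ODE m hm)
  simpa using h

lemma sq_sub_one_pow_expand (m : ℕ) : ((X^2 - 1 : Polynomial ℝ)^m) =
    ∑ i ∈ Finset.range (m+1), X^(2*i) * C ((-1:ℝ)^(m-i) * (m.choose i)) := by
  have h : (X^2 - 1 : Polynomial ℝ) = X^2 + C (-1) := by
    rw [C_neg, C_1]; ring
  rw [h, add_pow]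
  refine Finset.sum_congr rfl fun i _ => ?_
  rw [← map_pow, pow_mul, map_mul, C_eq_natCast]
  push_cast
  ring

lemma coeff_sq_sub_one_pow_even (m k : ℕ) (hk : k ≤ m) :
    ((X^2-1: Polynomial ℝ)^m).coeff (2*k) = (-1:ℝ)^(m-k) * (m.choose k) := by
  rw [sq_sub_one_pow_expand, finset_sum_coeff]
  rw [Finset.sum_eq_single k]
  · rw [coeff_mul_C, coeff_X_pow, if_pos rfl, one_mul]
  · intro i _ hik
    rw [coeff_mul_C, coeff_X_pow, if_neg (by omega), zero_mul]
  · intro h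
    exact absurd (Finset.mem_range.2 (by omega)) h

lemma coeff_sq_sub_one_pow_odd (m k : ℕ) :
    ((X^2-1: Polynomial ℝ)^m).coeff (2*k+1) = 0 := by
  rw [sq_sub_one_pow_expand, finset_sum_coeff]
  refine Finset.sum_eq_zero fun i _ => ?_
  rw [coeff_mul_C, coeff_X_pow, if_neg (by omega), zero_mul]

lemma iterate_deriv_eval_zero (p : Polynomial ℝ) (n : ℕ) :
    (derivative^[n] p).eval 0 = (n.factorial : ℝ) * p.coeff n := by
  rw [← coeff_zero_eq_eval_zero, coeff_iterate_derivative, zero_add,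
    Nat.descFactorial_self, nsmul_eq_mul]

lemma legP_eval0 (m : ℕ) : (legendreP m).eval 0 =
    (1/(2^m * (m.factorial:ℝ))) * ((m.factorial:ℝ) * ((X^2-1: Polynomial ℝ)^m).coeff m) := by
  unfold legendreP
  rw [eval_mul, eval_C, iterate_deriv_eval_zero]

lemma legP_deriv_eval0 (m : ℕ) : (derivative (legendreP m)).eval 0 =
    (1/(2^m * (m.factorial:ℝ))) * (((m+1).factorial:ℝ) * ((X^2-1: Polynomial ℝ)^m).coeff (m+1)) := by
  unfold legendreP
  rw [derivative_C_mul, eval_mul, eval_C,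
    show derivative (derivative^[m] ((X^2-1: Polynomial ℝ)^m))
      = derivative^[m+1] ((X^2-1: Polynomial ℝ)^m) from (Function.iterate_succ_apply' _ _ _).symm,
    iterate_deriv_eval_zero]


lemma central_sq_le (k : ℕ) : (((2*k).choose k : ℝ)/4^k)^2 ≤ 4*((k:ℝ)+1)/(π*(2*(k:ℝ)+1)^2) := by
  have hT : ((2*k).factorial : ℝ) = ((2*k).choose k : ℝ) * (k.factorial:ℝ)^2 := by
    have := Nat.choose_mul_factorial_mul_factorial (show k ≤ 2*k by omega)
    rw [show 2*k-k = k by omega] at this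
    have := congrArg (Nat.cast (R := ℝ)) this
    push_cast at this
    nlinarith [this]
  have hc0 : (0:ℝ) < ((2*k).choose k : ℝ) := by
    exact_mod_cast Nat.choose_pos (show k ≤ 2*k by omega)
  have hF0 : (0:ℝ) < (k.factorial:ℝ) := by exact_mod_cast k.factorial_pos
  have hW := Real.Wallis.le_W k
  rw [Real.Wallis.W_eq_factorial_ratio, hT, div_mul_div_comm,
    div_le_div_iff₀ (by positivity) (by positivity)] at hW
  have key' : ((2*k).choose k : ℝ)^2 * (π * (2*(k:ℝ)+1)^2) * (k.factorial:ℝ)^4 ≤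
      (4*((k:ℝ)+1)) * 2^(4*k) * (k.factorial:ℝ)^4 := by
    have e1 : ((2*k).choose k : ℝ)^2 * (π * (2*(k:ℝ)+1)^2) * (k.factorial:ℝ)^4
        = (2*(k:ℝ)+1)*π*((((2*k).choose k : ℝ)*(k.factorial:ℝ)^2)^2*(2*(k:ℝ)+1)) := by ring
    have e2 : (4*((k:ℝ)+1)) * 2^(4*k) * (k.factorial:ℝ)^4
        = 2^(4*k)*(k.factorial:ℝ)^4*((2*(k:ℝ)+2)*2) := by ring
    rw [e1, e2]; exact hW
  have key : ((2*k).choose k : ℝ)^2 * (π * (2*(k:ℝ)+1)^2) ≤ (4*((k:ℝ)+1)) * ((4:ℝ)^k)^2 := by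
    have h2 : ((4:ℝ)^k)^2 = 2^(4*k) := by
      rw [show (4:ℝ) = 2^2 by norm_num, ← pow_mul, ← pow_mul]
      ring_nf
    rw [h2]
    exact le_of_mul_le_mul_right key' (by positivity)
  rw [div_pow, div_le_div_iff₀ (by positivity) (by positivity)]
  linarith [key]


lemma value_bound (m : ℕ) (hm : 1 ≤ m) :
    (legendreP m).eval 0 ^ 2 + 4 * ((derivative (legendreP m)).eval 0)^2 / ((2*(m:ℝ)+1)^2+1)
      ≤ 2/(π*m) := by
  have hπ := Real.pi_pos
  rcases Nat.even_or_odd m with ⟨k, hk⟩ | ⟨k, hk⟩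
  · -- even, m = k + k
    have hm2 : m = 2*k := by omega
    subst hm2
    have hk1 : (1:ℕ) ≤ k := by omega
    have hd : (derivative (legendreP (2*k))).eval 0 = 0 := by
      rw [legP_deriv_eval0, coeff_sq_sub_one_pow_odd]
      ring
    have hneg : ((-1:ℝ)^k)^2 = 1 := by rw [← pow_mul, mul_comm, pow_mul]; norm_num
    have hev : (legendreP (2*k)).eval 0 = (-1:ℝ)^k * (((2*k).choose k : ℝ)/4^k) := by
      rw [legP_eval0, coeff_sq_sub_one_pow_even _ _ (by omega),
        show 2*k-k = k from by omega,
        show (2:ℝ)^(2*k) = 4^k from by rw [pow_mul]; norm_num]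
      have hF : ((2*k).factorial : ℝ) ≠ 0 := by positivity
      field_simp
    have he : (legendreP (2*k)).eval 0 ^ 2 = (((2*k).choose k : ℝ)/4^k)^2 := by
      rw [hev, mul_pow, hneg, one_mul]
    rw [hd, he]
    have hc := central_sq_le k
    have hstep : 4*((k:ℝ)+1)/(π*(2*(k:ℝ)+1)^2) ≤ 2/(π*(2*k:ℕ)) := by
      push_cast
      rw [div_le_div_iff₀ (by positivity) (by positivity)]
      have : (0:ℝ) < (k:ℝ) := by exact_mod_cast hk1
      nlinarith [hπ, this]
    simp only [zero_pow, ne_eq, OfNat.ofNat_ne_zero, not_false_eq_true, zero_div, mul_zero,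
      zero_mul]
    push_cast at hstep ⊢
    nlinarith [hc, hstep]
  · -- odd, m = 2k+1
    subst hk
    have he : (legendreP (2*k+1)).eval 0 = 0 := by
      rw [legP_eval0, coeff_sq_sub_one_pow_odd]
      ring
    have hneg : ((-1:ℝ)^k)^2 = 1 := by rw [← pow_mul, mul_comm, pow_mul]; norm_num
    have hch : ((k:ℝ)+1) * ((2*k+1).choose (k+1) : ℝ) = (2*(k:ℝ)+1) * ((2*k).choose k : ℝ) := by
      have := Nat.add_one_mul_choose_eq (2*k) k
      have := congrArg (Nat.cast (R := ℝ)) this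
      push_cast at this
      nlinarith [this]
    have hdv : (derivative (legendreP (2*k+1))).eval 0
        = (-1:ℝ)^k * ((2*(k:ℝ)+1) * (((2*k).choose k : ℝ)/4^k)) := by
      rw [legP_deriv_eval0, show (2*k+1)+1 = 2*(k+1) from by omega,
        coeff_sq_sub_one_pow_even _ _ (by omega),
        show 2*k+1-(k+1) = k from by omega]
      have hfac : (((2*(k+1)).factorial : ℝ)) = (2*(k:ℝ)+2) * ((2*k+1).factorial : ℝ) := by
        rw [show 2*(k+1) = (2*k+1)+1 from by omega, Nat.factorial_succ]
        push_cast
        ring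
      have hF : ((2*k+1).factorial : ℝ) ≠ 0 := by positivity
      have h2m : (2:ℝ)^(2*k+1) = 2 * 4^k := by
        rw [pow_succ, pow_mul]
        norm_num
        ring
      rw [hfac, h2m]
      field_simp
      linear_combination hch
    have hd : ((derivative (legendreP (2*k+1))).eval 0)^2
        = (2*(k:ℝ)+1)^2 * (((2*k).choose k : ℝ)/4^k)^2 := by
      rw [hdv, mul_pow, hneg, one_mul, mul_pow]
    rw [he, hd]
    have hc := central_sq_le k
    have hc' : (((2*k).choose k : ℝ)/4^k)^2 * (π*(2*(k:ℝ)+1)^2) ≤ 4*((k:ℝ)+1) :=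
      (le_div_iff₀ (by positivity)).1 hc
    push_cast
    rw [show (0:ℝ)^2 + 4 * ((2 * (k:ℝ) + 1) ^ 2 * (((2*k).choose k : ℝ) / 4 ^ k) ^ 2) / ((2 * (2 * (k:ℝ) + 1) + 1) ^ 2 + 1)
        = 4 * ((2 * (k:ℝ) + 1) ^ 2 * (((2*k).choose k : ℝ) / 4 ^ k) ^ 2) / ((2 * (2 * (k:ℝ) + 1) + 1) ^ 2 + 1) from by ring]
    rw [div_le_div_iff₀ (by positivity) (by positivity)]
    nlinarith [mul_le_mul_of_nonneg_left hc' (show (0:ℝ) ≤ 4*(2*(k:ℝ)+1) by positivity), hπ,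
      sq_nonneg (((2*k).choose k : ℝ) / 4 ^ k)]

section calc1

variable (m : ℕ)

noncomputable def Ffun (m : ℕ) : ℝ → ℝ := fun t =>
  Real.sin t * (((legendreP m).eval (Real.cos t))^2 +
    (Real.cos t * (legendreP m).eval (Real.cos t)
      - 2 * Real.sin t^2 * (derivative (legendreP m)).eval (Real.cos t))^2
      / ((2*(m:ℝ)+1)^2 * Real.sin t^2 + 1))

lemma hasDeriv_F (m : ℕ) (hm : 1 ≤ m) (t : ℝ) :
    HasDerivAt (Ffun m)
      (2 * Real.cos t * (Real.cos t * (legendreP m).eval (Real.cos t)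
        - 2 * Real.sin t^2 * (derivative (legendreP m)).eval (Real.cos t))^2
        / ((2*(m:ℝ)+1)^2 * Real.sin t^2 + 1)^2) t := by
  set p := legendreP m with hp
  set q := derivative p with hq
  set r := derivative q with hr
  have hDpos : (0:ℝ) < (2*(m:ℝ)+1)^2 * Real.sin t^2 + 1 := by positivity
  have hcos : HasDerivAt Real.cos (-Real.sin t) t := Real.hasDerivAt_cos t
  have hsin : HasDerivAt Real.sin (Real.cos t) t := Real.hasDerivAt_sin t
  have hP : HasDerivAt (fun u => p.eval (Real.cos u)) (q.eval (Real.cos t) * -Real.sin t) t :=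
    (p.hasDerivAt (Real.cos t)).comp t hcos
  have hQ : HasDerivAt (fun u => q.eval (Real.cos u)) (r.eval (Real.cos t) * -Real.sin t) t :=
    (q.hasDerivAt (Real.cos t)).comp t hcos
  have hsin2 : HasDerivAt (fun u => Real.sin u^2)
      ((2:ℕ) * Real.sin t^(2-1) * Real.cos t) t := hsin.pow 2
  have hG : HasDerivAt (fun u => Real.cos u * p.eval (Real.cos u)
      - 2 * Real.sin u^2 * q.eval (Real.cos u)) (((-Real.sin t) * p.eval (Real.cos t)
        + Real.cos t * (q.eval (Real.cos t) * -Real.sin t))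
      - ((2 * ((2:ℕ) * Real.sin t^(2-1) * Real.cos t)) * q.eval (Real.cos t)
        + (2 * Real.sin t^2) * (r.eval (Real.cos t) * -Real.sin t))) t :=
    (hcos.mul hP).sub (((hsin2.const_mul 2)).mul hQ)
  have hG2 := hG.pow 2
  have hDen : HasDerivAt (fun u => (2*(m:ℝ)+1)^2 * Real.sin u^2 + 1)
      ((2*(m:ℝ)+1)^2 * ((2:ℕ) * Real.sin t^(2-1) * Real.cos t)) t :=
    (hsin2.const_mul ((2*(m:ℝ)+1)^2)).add_const 1
  have hquot := hG2.div hDen (ne_of_gt hDpos)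
  have hP2 := hP.pow 2
  have hF := hsin.mul (hP2.add hquot)
  refine (hF.congr_deriv ?_).congr_of_eventuallyEq (Filter.Eventually.of_forall fun _ => rfl)
  symm
  have hsc : Real.sin t^2 + Real.cos t^2 = 1 := Real.sin_sq_add_cos_sq t
  have hode : Real.sin t^2 * (r.eval (Real.cos t)) =
      2*Real.cos t*(q.eval (Real.cos t)) - ((m:ℝ)*((m:ℝ)+1))*(p.eval (Real.cos t)) := by
    have hO := legendre_ODE_eval m hm (Real.cos t)
    rw [← hq, ← hr] at hO
    linear_combination hO + (r.eval (Real.cos t)) * hsc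
  push_cast
  norm_num
  set s := Real.sin t with hsv
  set c := Real.cos t with hcv
  set P := p.eval c with hPv
  set Q := q.eval c with hQv
  set R := r.eval c with hRv
  field_simp
  linear_combination (4*s^2*(2*s^2*Q - c*P) * ((2*(m:ℝ)+1)^2*s^2+1)) * hode
    + ((c*P^2 - 2*s^2*P*Q) * ((2*(m:ℝ)+1)^2*s^2+1)) * hsc
end calc1

theorem bernstein_inequality_legendre (m : ℕ) (hm : 1 ≤ m) (θ : ℝ)
    (hθ : θ ∈ Set.Ioo 0 Real.pi) :
    ((legendreP m).eval (Real.cos θ)) ^ 2 ≤ (2 / Real.pi) * (1 / (m * Real.sin θ)) := by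
  obtain ⟨hθ0, hθπ⟩ := hθ
  have hπ := Real.pi_pos
  have hs : 0 < Real.sin θ := Real.sin_pos_of_pos_of_lt_pi hθ0 hθπ
  have hm0 : (0:ℝ) < m := by exact_mod_cast hm
  have hcont : Continuous (Ffun m) :=
    continuous_iff_continuousAt.2 fun t => (hasDeriv_F m hm t).continuousAt
  have hkey : Ffun m θ ≤ Ffun m (π/2) := by
    rcases le_total θ (π/2) with h | h
    · refine monotoneOn_of_deriv_nonneg (convex_Icc θ (π/2)) hcont.continuousOn
        (fun x _ => (hasDeriv_F m hm x).differentiableAt.differentiableWithinAt) ?_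
        (Set.left_mem_Icc.2 h) (Set.right_mem_Icc.2 h) h
      intro x hx
      rw [interior_Icc] at hx
      rw [(hasDeriv_F m hm x).deriv]
      have hcx : 0 ≤ Real.cos x := Real.cos_nonneg_of_mem_Icc
        ⟨by nlinarith [hx.1, hx.2, hπ], hx.2.le⟩
      apply div_nonneg _ (by positivity)
      have := sq_nonneg (Real.cos x * (legendreP m).eval (Real.cos x)
        - 2 * Real.sin x^2 * (derivative (legendreP m)).eval (Real.cos x))
      nlinarith [this, hcx]
    · refine antitoneOn_of_deriv_nonpos (convex_Icc (π/2) θ) hcont.continuousOn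
        (fun x _ => (hasDeriv_F m hm x).differentiableAt.differentiableWithinAt) ?_
        (Set.left_mem_Icc.2 h) (Set.right_mem_Icc.2 h) h
      intro x hx
      rw [interior_Icc] at hx
      rw [(hasDeriv_F m hm x).deriv]
      have hcx : Real.cos x ≤ 0 := Real.cos_nonpos_of_pi_div_two_le_of_le hx.1.le
        (by nlinarith [hx.2, hπ])
      apply div_nonpos_of_nonpos_of_nonneg _ (by positivity)
      have := sq_nonneg (Real.cos x * (legendreP m).eval (Real.cos x)
        - 2 * Real.sin x^2 * (derivative (legendreP m)).eval (Real.cos x))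
      nlinarith [this, hcx]
  have hlow : Real.sin θ * ((legendreP m).eval (Real.cos θ))^2 ≤ Ffun m θ := by
    unfold Ffun
    have h1 : 0 ≤ (Real.cos θ * (legendreP m).eval (Real.cos θ)
      - 2 * Real.sin θ^2 * (derivative (legendreP m)).eval (Real.cos θ))^2
        / ((2*(m:ℝ)+1)^2 * Real.sin θ^2 + 1) := by positivity
    nlinarith [h1, hs.le]
  have hval : Ffun m (π/2) = (legendreP m).eval 0 ^ 2
      + 4*((derivative (legendreP m)).eval 0)^2/((2*(m:ℝ)+1)^2+1) := by
    unfold Ffun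
    rw [Real.sin_pi_div_two, Real.cos_pi_div_two]
    norm_num
    ring
  have hfinal : Real.sin θ * ((legendreP m).eval (Real.cos θ))^2 ≤ 2/(π*m) := by
    have := value_bound m hm
    rw [← hval] at this
    exact hlow.trans (hkey.trans this)
  rw [show (2/π)*(1/((m:ℝ)*Real.sin θ)) = (2/(π*(m:ℝ)))/Real.sin θ from by
    field_simp]
  rw [le_div_iff₀ hs]
  nlinarith [hfinal]
end
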